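/- For every infinite cardinal λ, any graph G on λ vertices contains either a clique of size λ or a countably infinite independent set. (Dushnik–Erdős–Miller: λ → (λ, ω)².) -/

import Mathlib

open Cardinal

universe u v

/-- A well-ordering of the vertices of `G` in which every vertex has
fewer than `μ` neighbours preceding it (a *good* well-ordering for `μ`). -/
def HasGoodOrder {V : Type u} (G : SimpleGraph V) (μ : Cardinal.{u}) : Prop :=
  ∃ r : V → V → Prop, IsWellOrder V r ∧ ∀ v : V, #{w : V | G.Adj v w ∧ r w v} < μ

/-- The colouring number of `G`: the least cardinal `κ` admitting a
well-ordering of the vertices in which each vertex has fewer than `κ`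
earlier neighbours. -/
noncomputable def col {V : Type u} (G : SimpleGraph V) : Cardinal.{u} :=
  sInf {μ : Cardinal.{u} | HasGoodOrder G μ}

/-- `X` is robust (for `μ`): every vertex outside `X` has fewer than `μ`
neighbours inside `X`. -/
def Robust {V : Type u} (G : SimpleGraph V) (μ : Cardinal.{u}) (X : Set V) : Prop :=
  ∀ v ∉ X, #(G.neighborSet v ∩ X : Set V) < μ

/-- `G` contains a `μ`-barricade as a subgraph: disjoint vertex sets `A`, `B`
with `|A| < |B|` such that every vertex of `B` has at least `μ` neighbours in `A`. -/
def HasBarricade {V : Type u} (G : SimpleGraph V) (μ : Cardinal.{u}) : Prop :=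
  ∃ A B : Set V, Disjoint A B ∧ #A < #B ∧
    ∀ b ∈ B, μ ≤ #(G.neighborSet b ∩ A : Set V)

/-- `G` contains a `μ`-obstruction of type I as a subgraph: disjoint sets `A`, `B`
with `|A| = λ ≥ μ`, `|B| = λ⁺`, every vertex of `B` having at least `μ`
neighbours in `A` and every vertex of `A` having `λ⁺` neighbours in `B`. -/
def HasTypeIObstruction {V : Type u} (G : SimpleGraph V) (μ : Cardinal.{u}) : Prop :=
  ∃ (A B : Set V) (lam : Cardinal.{u}), Disjoint A B ∧ μ ≤ lam ∧
    #A = lam ∧ #B = Order.succ lam ∧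
    (∀ b ∈ B, μ ≤ #(G.neighborSet b ∩ A : Set V)) ∧
    (∀ a ∈ A, #(G.neighborSet a ∩ B : Set V) = Order.succ lam)

/-- `G` itself is a `μ`-obstruction of type I: a bipartite graph with
bipartition `(A, B)` satisfying the type I conditions. -/
def IsTypeIObstruction {V : Type u} (G : SimpleGraph V) (μ : Cardinal.{u}) : Prop :=
  ∃ (A B : Set V) (lam : Cardinal.{u}), Disjoint A B ∧ A ∪ B = Set.univ ∧
    (∀ a b, G.Adj a b → (a ∈ A ∧ b ∈ B) ∨ (a ∈ B ∧ b ∈ A)) ∧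
    μ ≤ lam ∧ #A = lam ∧ #B = Order.succ lam ∧
    (∀ b ∈ B, μ ≤ #(G.neighborSet b ∩ A : Set V)) ∧
    (∀ a ∈ A, #(G.neighborSet a ∩ B : Set V) = Order.succ lam)

/-- `C` is closed and unbounded in the ordinal `o`. -/
def IsClubIn (C : Set Ordinal.{v}) (o : Ordinal.{v}) : Prop :=
  (∀ a < o, ∃ b ∈ C, a ≤ b ∧ b < o) ∧
  (∀ a < o, a ≠ 0 → sSup (C ∩ Set.Iio a) = a → a ∈ C)

/-- `S` is stationary in the ordinal `o`: it meets every club subset of `o`. -/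
def IsStationaryIn (S : Set Ordinal.{v}) (o : Ordinal.{v}) : Prop :=
  ∀ C : Set Ordinal.{v}, IsClubIn C o → (S ∩ C ∩ Set.Iio o).Nonempty

/-- The set `T_H` of vertices `α` (ordinals) with `cf α = cf μ`, whose set of
neighbours below `α` has order type `μ` and supremum `α`. -/
noncomputable def typeIITarget (H : SimpleGraph Ordinal.{v}) (μ : Cardinal.{v}) :
    Set Ordinal.{v} :=
  {α | α.cof = μ.ord.cof ∧
    Ordinal.type (Subrel ((· < ·) : Ordinal.{v} → Ordinal.{v} → Prop)
      (· ∈ H.neighborSet α ∩ Set.Iio α)) = Ordinal.lift.{v + 1} μ.ord ∧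
    sSup (H.neighborSet α ∩ Set.Iio α) = α}

/-- `H` is a `μ`-obstruction of type II with vertex set the regular cardinal
`κ > μ` (realised as the ordinals below `κ`): `T_H` is stationary in `κ`. -/
def IsTypeIIObstruction (H : SimpleGraph Ordinal.{v}) (μ κ : Cardinal.{v}) : Prop :=
  μ < κ ∧ κ.IsRegular ∧ (∀ a b, H.Adj a b → a < κ.ord ∧ b < κ.ord) ∧
  IsStationaryIn (typeIITarget H μ) κ.ord

/-- `G` contains a `μ`-obstruction of type II as a subgraph. -/
def HasTypeIIObstruction {V : Type u} (G : SimpleGraph V) (μ : Cardinal.{v}) : Prop :=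
  ∃ (κ : Cardinal.{v}) (H : SimpleGraph Ordinal.{v}) (f : Ordinal.{v} → V),
    Set.InjOn f (Set.Iio κ.ord) ∧ (∀ a b, H.Adj a b → G.Adj (f a) (f b)) ∧
    IsTypeIIObstruction H μ κ

/-- `G` contains a complete subgraph on `μ` vertices. -/
def HasCompleteSubgraph {V : Type u} (G : SimpleGraph V) (μ : Cardinal.{u}) : Prop :=
  ∃ S : Set V, #S = μ ∧ S.Pairwise G.Adj

/-- `G` contains an induced copy of the complete bipartite graph `K_{k,ω}`. -/
def HasInducedKkOmega {V : Type u} (G : SimpleGraph V) (k : ℕ) : Prop :=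
  ∃ A B : Set V, Disjoint A B ∧ #A = (k : Cardinal.{u}) ∧ #B = ℵ₀ ∧
    (∀ a ∈ A, ∀ b ∈ B, G.Adj a b) ∧
    (∀ a ∈ A, ∀ a' ∈ A, a ≠ a' → ¬ G.Adj a a') ∧
    (∀ b ∈ B, ∀ b' ∈ B, b ≠ b' → ¬ G.Adj b b')

namespace DEM
variable {V : Type u}

/-- Zorn-based lemma: small degrees inside `A` give a large independent set. -/
lemma lemmaB (H : SimpleGraph V) {κ : Cardinal.{u}} (hreg : κ.IsRegular)
    (A : Set V) (hA : κ ≤ #A) (hdeg : ∀ v ∈ A, #(H.neighborSet v ∩ A : Set V) < κ) :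
    ∃ S : Set V, S ⊆ A ∧ #S = κ ∧ S.Pairwise (fun a b => ¬ H.Adj a b) := by
  set 𝒮 : Set (Set V) := {S | S ⊆ A ∧ S.Pairwise (fun a b => ¬ H.Adj a b)} with h𝒮
  obtain ⟨M, hM⟩ : ∃ M, Maximal (· ∈ 𝒮) M := by
    apply zorn_subset
    intro c hc hchain
    refine ⟨⋃₀ c, ⟨?_, ?_⟩, fun s hs => Set.subset_sUnion_of_mem hs⟩
    · exact Set.sUnion_subset fun s hs => (hc hs).1
    · intro a ha b hb hab
      obtain ⟨s, hs, has⟩ := ha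
      obtain ⟨t, ht, hbt⟩ := hb
      rcases hchain.total hs ht with h | h
      · exact (hc ht).2 (h has) hbt hab
      · exact (hc hs).2 has (h hbt) hab
  have hMA : M ⊆ A := hM.1.1
  have hMp : M.Pairwise (fun a b => ¬ H.Adj a b) := hM.1.2
  have hcov : A ⊆ M ∪ ⋃ m : M, (H.neighborSet (m : V) ∩ A) := by
    intro v hv
    by_contra hvn
    rw [Set.mem_union] at hvn
    push_neg at hvn
    obtain ⟨hvM, hvU⟩ := hvn
    have hnadj : ∀ m ∈ M, ¬ H.Adj m v := by
      intro m hm hadj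
      exact hvU (Set.mem_iUnion.2 ⟨⟨m, hm⟩, hadj, hv⟩)
    have : insert v M ∈ 𝒮 := by
      refine ⟨Set.insert_subset hv hMA, ?_⟩
      haveI : Std.Symm (fun a b : V => ¬ H.Adj a b) := ⟨fun a b h' h2 => h' (H.adj_symm h2)⟩
      rw [Set.pairwise_insert_of_symm]
      exact ⟨hMp, fun b hb _ h' => hnadj b hb (H.adj_symm h')⟩
    exact hvM (hM.2 this (Set.subset_insert v M) (Set.mem_insert v M))
  have hMcard : κ ≤ #M := by
    by_contra hlt
    push_neg at hlt
    have h1 : #(⋃ m : M, (H.neighborSet (m : V) ∩ A) : Set V) < κ := by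
      refine lt_of_le_of_lt (mk_iUnion_le_sum_mk) ?_
      refine Cardinal.sum_lt_of_isRegular hreg hlt ?_
      exact fun m => hdeg m (hMA m.2)
    have := (mk_le_mk_of_subset hcov).trans (mk_union_le _ _)
    exact absurd (hA.trans this) (by
      push_neg
      exact (Cardinal.add_lt_of_lt hreg.aleph0_le hlt h1))
  obtain ⟨S, hSM, hS⟩ := Cardinal.le_mk_iff_exists_subset.1 hMcard
  exact ⟨S, hSM.trans hMA, hS, hMp.mono hSM⟩


/-- common neighbourhood of a finite set inside `A₀`. -/
def cn (H : SimpleGraph V) (A₀ : Set V) (F : Finset V) : Set V :=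
  {w | w ∈ A₀ ∧ w ∉ F ∧ ∀ v ∈ F, H.Adj v w}

lemma lemmaC (H : SimpleGraph V)
    (hno : ∀ S : Set V, S.Pairwise H.Adj → S.Finite)
    (κ : Cardinal.{u}) (A₀ : Set V) (hA₀ : κ ≤ #A₀) :
    ∃ A : Set V, A ⊆ A₀ ∧ κ ≤ #A ∧ ∀ v ∈ A, #(H.neighborSet v ∩ A : Set V) < κ := by
  classical
  set Big : Finset V → Prop :=
    fun F => (↑F : Set V).Pairwise H.Adj ∧ κ ≤ #(cn H A₀ F) with hBig
  by_cases hext : ∀ F : Finset V, Big F →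
      ∃ v ∈ cn H A₀ F, κ ≤ #(cn H A₀ (insert v F))
  · -- build an infinite clique, contradiction
    exfalso
    have step : ∀ F : Finset V, Big F →
        ∃ F' : Finset V, Big F' ∧ F ⊆ F' ∧ F.card < F'.card := by
      intro F hF
      obtain ⟨v, hv, hbig⟩ := hext F hF
      refine ⟨insert v F, ⟨?_, hbig⟩, Finset.subset_insert _ _,
        by rw [Finset.card_insert_of_notMem hv.2.1]; omega⟩
      haveI : Std.Symm H.Adj := ⟨fun a b h => H.adj_symm h⟩
      rw [Finset.coe_insert,
        Set.pairwise_insert_of_symm]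
      exact ⟨hF.1, fun b hb _ => H.adj_symm (hv.2.2 b hb)⟩
    have big0 : Big (∅ : Finset V) := by
      constructor
      · simp [Set.pairwise_empty]
      · refine hA₀.trans (mk_le_mk_of_subset ?_)
        intro w hw
        exact ⟨hw, by simp, by simp⟩
    let next : {F : Finset V // Big F} → {F : Finset V // Big F} :=
      fun F => ⟨(step F.1 F.2).choose, (step F.1 F.2).choose_spec.1⟩
    let g : ℕ → {F : Finset V // Big F} := fun n => next^[n] ⟨∅, big0⟩
    have hsub : ∀ n, (g n).1 ⊆ (g (n + 1)).1 := by
      intro n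
      have : g (n + 1) = next (g n) := Function.iterate_succ_apply' _ _ _
      rw [this]
      exact (step (g n).1 (g n).2).choose_spec.2.1
    have hcard : ∀ n, n ≤ (g n).1.card := by
      intro n
      induction n with
      | zero => omega
      | succ n ih =>
        have : g (n + 1) = next (g n) := Function.iterate_succ_apply' _ _ _
        have h2 := (step (g n).1 (g n).2).choose_spec.2.2
        rw [this]
        have : ((g n).1.card) < (next (g n)).1.card := h2
        omega
    have hmono : ∀ m n, m ≤ n → (g m).1 ⊆ (g n).1 := by
      intro m n h
      induction n with
      | zero => simpa [Nat.le_zero.1 h]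
      | succ n ih =>
        rcases Nat.lt_or_ge m (n + 1) with h' | h'
        · exact (ih (by omega)).trans (hsub n)
        · have : m = n + 1 := by omega
          simp [this]
    set S : Set V := ⋃ n, ((g n).1 : Set V) with hS
    have hpair : S.Pairwise H.Adj := by
      intro a ha b hb hab
      obtain ⟨m, hm⟩ := Set.mem_iUnion.1 ha
      obtain ⟨n, hn⟩ := Set.mem_iUnion.1 hb
      have ham : a ∈ ((g (max m n)).1 : Set V) := hmono m _ (le_max_left _ _) hm
      have hbn : b ∈ ((g (max m n)).1 : Set V) := hmono n _ (le_max_right _ _) hn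
      exact (g (max m n)).2.1 ham hbn hab
    have hfin := hno S hpair
    have : ∀ n, (g n).1 ⊆ hfin.toFinset := by
      intro n x hx
      exact hfin.mem_toFinset.2 (Set.mem_iUnion.2 ⟨n, hx⟩)
    have hle := Finset.card_le_card (this (hfin.toFinset.card + 1))
    have := hcard (hfin.toFinset.card + 1)
    omega
  · push_neg at hext
    obtain ⟨F, hF, hmax⟩ := hext
    refine ⟨cn H A₀ F, fun w hw => hw.1, hF.2, ?_⟩
    intro v hv
    refine lt_of_le_of_lt (mk_le_mk_of_subset ?_) (hmax v hv)
    rintro w ⟨hwv, hw⟩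
    have hadj : H.Adj v w := hwv
    refine ⟨hw.1, ?_, ?_⟩
    · simp only [Finset.mem_insert, not_or]
      exact ⟨fun h => H.ne_of_adj hadj h.symm, hw.2.1⟩
    · intro u hu
      rcases Finset.mem_insert.1 hu with h | h
      · rwa [h]
      · exact hw.2.2 u h


lemma lemmaReg (H : SimpleGraph V)
    (hno : ∀ S : Set V, S.Pairwise H.Adj → S.Finite)
    {κ : Cardinal.{u}} (hreg : κ.IsRegular)
    (A₀ : Set V) (hA₀ : κ ≤ #A₀) :
    ∃ S : Set V, S ⊆ A₀ ∧ #S = κ ∧ S.Pairwise (fun a b => ¬ H.Adj a b) := by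
  obtain ⟨A, hAA₀, hA, hdeg⟩ := lemmaC H hno κ A₀ hA₀
  obtain ⟨S, hSA, hS, hSp⟩ := lemmaB H hreg A hA hdeg
  exact ⟨S, hSA.trans hAA₀, hS, hSp⟩

section Rec
variable (H : SimpleGraph V) (A : Set V) (lam : Cardinal.{u})
  {ι : Type u} [LinearOrder ι] [WellFoundedLT ι] (e : ι → Cardinal.{u})

def closA (S : Set V) : Set V := S ∪ ⋃ b : S, (H.neighborSet (b : V) ∩ A)

def Cond (i : ι) (bad : Set V) (S : Set V) : Prop :=
  S ⊆ A \ bad ∧ e i ≤ #S ∧ S.Pairwise (fun a b => ¬ H.Adj a b) ∧ #(closA H A S) < lam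

open scoped Classical in
noncomputable def pick : ι → Set V :=
  (IsWellFounded.wf (r := ((· < ·) : ι → ι → Prop))).fix fun i rec =>
    if h : ∃ S, Cond H A lam e i (⋃ j, ⋃ h' : j < i, closA H A (rec j h')) S
    then h.choose else ∅

open scoped Classical in
noncomputable def badSet (i : ι) : Set V :=
  ⋃ j, ⋃ _ : j < i, closA H A (pick H A lam e j)

open scoped Classical in
lemma pick_eq (i : ι) : pick H A lam e i =
    if h : ∃ S, Cond H A lam e i (badSet H A lam e i) S then h.choose else ∅ := by
  unfold pick badSet
  rw [WellFounded.fix_eq]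
  rfl

lemma pick_spec
    (hno : ∀ S : Set V, S.Pairwise H.Adj → S.Finite)
    (hlam : ℵ₀ ≤ lam)
    (hsucc : ∀ c, c < lam → Order.succ (max c ℵ₀) < lam)
    (hι : ∀ i : ι, #(Set.Iio i) < lam.ord.cof)
    (he : ∀ i, e i < lam)
    (hCF : ∀ c, c < lam → ∃ μ, μ < lam ∧
      c < #({v | v ∈ A ∧ #(H.neighborSet v ∩ A : Set V) ≤ μ} : Set V)) :
    ∀ i : ι, Cond H A lam e i (badSet H A lam e i) (pick H A lam e i) := by
  intro i
  induction i using (IsWellFounded.wf (r := ((· < ·) : ι → ι → Prop))).induction with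
  | _ i IH =>
  have hbad : #(badSet H A lam e i) < lam := by
    have h1 : badSet H A lam e i
        = ⋃ j : (Set.Iio i), closA H A (pick H A lam e (j : ι)) := by
      unfold badSet
      ext x
      simp only [Set.mem_iUnion, Subtype.exists, Set.mem_Iio, exists_prop]

    rw [h1]
    refine lt_of_le_of_lt mk_iUnion_le_sum_mk ?_
    refine lt_of_le_of_lt (Cardinal.sum_le_mk_mul_iSup _) ?_
    have hsup : (⨆ j : (Set.Iio i), #(closA H A (pick H A lam e (j : ι)))) < lam :=
      Cardinal.iSup_lt_of_lt_cof_ord (hι i) (fun j => (IH j j.2).2.2.2)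
    refine Cardinal.mul_lt_of_lt hlam (lt_of_lt_of_le (hι i) ?_) hsup
    exact Ordinal.cof_ord_le lam
  have hex : ∃ S, Cond H A lam e i (badSet H A lam e i) S := by
    set θ : Cardinal := Order.succ (max (e i) ℵ₀) with hθ
    have hθreg : θ.IsRegular := Cardinal.isRegular_succ (le_max_right _ _)
    have hθlam : θ < lam := hsucc _ (he i)
    obtain ⟨μ, hμlam, hμ⟩ := hCF (θ + #(badSet H A lam e i))
      (Cardinal.add_lt_of_lt hlam hθlam hbad)
    set Aμ : Set V := {v | v ∈ A ∧ #(H.neighborSet v ∩ A : Set V) ≤ μ} with hAμ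
    set A' : Set V := Aμ \ badSet H A lam e i with hA'
    have hA'card : θ ≤ #A' := by
      by_contra hc
      push_neg at hc
      have h2 : #Aμ ≤ #A' + #(badSet H A lam e i) := by
        refine le_trans (mk_le_mk_of_subset ?_) (mk_union_le _ _)
        intro v hv
        by_cases h : v ∈ badSet H A lam e i
        · exact Or.inr h
        · exact Or.inl ⟨hv, h⟩
      have h3 := h2.trans (add_le_add_left hc.le _)
      exact absurd (hμ.trans_le h3) (lt_irrefl _)
    obtain ⟨S, hSA', hScard, hSp⟩ := lemmaReg H hno hθreg A' hA'card
    refine ⟨S, ?_, ?_, hSp, ?_⟩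
    · intro x hx
      obtain ⟨hx1, hx2⟩ := hSA' hx
      exact ⟨hx1.1, hx2⟩
    · rw [hScard]
      exact le_trans (le_max_left _ _) (Order.le_succ _)
    · have hone : ∀ b : S, #(H.neighborSet (b : V) ∩ A : Set V) ≤ μ :=
        fun b => ((hSA' b.2).1).2
      have h4 : #(closA H A S) ≤ #S + #S * μ := by
        refine le_trans (mk_union_le _ _) (add_le_add le_rfl ?_)
        refine le_trans mk_iUnion_le_sum_mk ?_
        calc Cardinal.sum (fun b : S => #(H.neighborSet (b : V) ∩ A : Set V))
            ≤ Cardinal.sum (fun _ : S => μ) := Cardinal.sum_le_sum _ _ hone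
          _ = #S * μ := Cardinal.sum_const' _ _
      refine lt_of_le_of_lt h4 ?_
      rw [hScard]
      exact Cardinal.add_lt_of_lt hlam hθlam (Cardinal.mul_lt_of_lt hlam hθlam hμlam)
  rw [pick_eq, dif_pos hex]
  exact hex.choose_spec

end Rec

lemma lemmaSing (H : SimpleGraph V)
    (hno : ∀ S : Set V, S.Pairwise H.Adj → S.Finite)
    {lam : Cardinal.{u}} (hlam : ℵ₀ ≤ lam) (hns : ¬ lam.IsRegular)
    (hV : lam ≤ #V) :
    ∃ S : Set V, #S = lam ∧ S.Pairwise (fun a b => ¬ H.Adj a b) := by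
  have haleph : ℵ₀ < lam := lt_of_le_of_ne hlam
    (fun h => hns (h ▸ Cardinal.isRegular_aleph0))
  have hsucc : ∀ c, c < lam → Order.succ (max c ℵ₀) < lam := by
    intro c hc
    have hreg := Cardinal.isRegular_succ (le_max_right c ℵ₀)
    have hmax : max c ℵ₀ < lam := max_lt hc haleph
    rcases lt_or_eq_of_le (Order.succ_le_of_lt hmax) with h | h
    · exact h
    · exact absurd (h ▸ hreg) hns
  set κ := lam.ord.cof with hκdef
  have hκreg : κ.IsRegular := Cardinal.isRegular_cof (Cardinal.isSuccLimit_ord hlam)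
  have hκlam : κ < lam := by
    rcases lt_or_eq_of_le (Ordinal.cof_ord_le lam) with h | h
    · exact h
    · exact absurd ⟨hlam, h.ge⟩ hns
  obtain ⟨ι₀, f, hlsub, hι₀⟩ := Ordinal.exists_lsub_cof lam.ord
  haveI : IsWellOrder κ.ord.ToType ((· < ·) : κ.ord.ToType → κ.ord.ToType → Prop) :=
    isWellOrder_lt
  have hIcard : #(κ.ord.ToType) = κ := by rw [Cardinal.mk_toType, Cardinal.card_ord]
  obtain ⟨eqv⟩ : Nonempty (κ.ord.ToType ≃ ι₀) := by
    rw [← Cardinal.eq, hIcard, hι₀]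
  set e : κ.ord.ToType → Cardinal.{u} := fun i => (f (eqv i)).card with he'
  have he : ∀ i, e i < lam := by
    intro i
    have h1 := Ordinal.lt_lsub f (eqv i)
    rw [hlsub] at h1
    exact Cardinal.lt_ord.1 h1
  have hecof : ∀ c, c < lam → ∃ i, c ≤ e i := by
    intro c hc
    have h1 : c.ord < lam.ord := Cardinal.ord_lt_ord.2 hc
    rw [← hlsub] at h1
    obtain ⟨j, hj⟩ := Ordinal.lt_lsub_iff.1 h1
    refine ⟨eqv.symm j, ?_⟩
    have h2 := Ordinal.card_le_card hj
    rw [Cardinal.card_ord] at h2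
    simpa [he', Equiv.apply_symm_apply] using h2
  have hι : ∀ i : κ.ord.ToType, #(Set.Iio i) < κ := by
    intro i
    have h1 : Ordinal.typein ((· < ·) : κ.ord.ToType → κ.ord.ToType → Prop) i < κ.ord := by
      have := Ordinal.typein_lt_type ((· < ·) : κ.ord.ToType → κ.ord.ToType → Prop) i
      rwa [Ordinal.type_toType] at this
    have h2 := Cardinal.lt_ord.1 h1
    replace h2 := (Ordinal.card_typein (r := ((· < ·) : κ.ord.ToType → κ.ord.ToType → Prop)) i).trans_lt h2
    exact h2
  obtain ⟨A, -, hA, hdeg⟩ := lemmaC H hno lam Set.univ (by rw [mk_univ]; exact hV)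
  have hCF : ∀ c, c < lam → ∃ μ, μ < lam ∧
      c < #({v | v ∈ A ∧ #(H.neighborSet v ∩ A : Set V) ≤ μ} : Set V) := by
    intro c hc
    by_contra hcon
    push_neg at hcon
    have hcov : A ⊆ ⋃ i : κ.ord.ToType, {v | v ∈ A ∧ #(H.neighborSet v ∩ A : Set V) ≤ e i} := by
      intro v hv
      obtain ⟨i, hi⟩ := hecof _ (hdeg v hv)
      exact Set.mem_iUnion.2 ⟨i, hv, hi⟩
    have h2 : #A ≤ κ * c := by
      refine le_trans (mk_le_mk_of_subset hcov) (le_trans mk_iUnion_le_sum_mk ?_)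
      calc Cardinal.sum (fun i : κ.ord.ToType =>
              #({v | v ∈ A ∧ #(H.neighborSet v ∩ A : Set V) ≤ e i} : Set V))
          ≤ Cardinal.sum (fun _ : κ.ord.ToType => c) :=
            Cardinal.sum_le_sum _ _ (fun i => hcon _ (he i))
        _ = #(κ.ord.ToType) * c := Cardinal.sum_const' _ _
        _ = κ * c := by rw [hIcard]
    exact absurd (hA.trans h2) (not_le.2 (Cardinal.mul_lt_of_lt hlam hκlam hc))
  have hspec := pick_spec H A lam e hno hlam hsucc hι he hCF
  set B : Set V := ⋃ i : κ.ord.ToType, pick H A lam e i with hB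
  have hBsize : lam ≤ #B := by
    by_contra hcon
    push_neg at hcon
    obtain ⟨i, hi⟩ := hecof _ (hsucc _ hcon)
    have h1 : e i ≤ #B :=
      le_trans (hspec i).2.1 (mk_le_mk_of_subset (Set.subset_iUnion _ i))
    have h2 : #B < Order.succ (max #B ℵ₀) :=
      lt_of_le_of_lt (le_max_left _ _) (Order.lt_succ _)
    exact absurd ((hi.trans h1)) (not_le.2 h2)
  have hBpair : B.Pairwise (fun a b => ¬ H.Adj a b) := by
    intro a ha b hb hab
    obtain ⟨i, hai⟩ := Set.mem_iUnion.1 ha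
    obtain ⟨j, hbj⟩ := Set.mem_iUnion.1 hb
    rcases lt_trichotomy i j with hij | hij | hij
    · intro hadj
      have hbA : b ∈ A := ((hspec j).1 hbj).1
      have hbbad : b ∈ badSet H A lam e j := by
        refine Set.mem_iUnion.2 ⟨i, Set.mem_iUnion.2 ⟨hij, Or.inr ?_⟩⟩
        exact Set.mem_iUnion.2 ⟨⟨a, hai⟩, hadj, hbA⟩
      exact ((hspec j).1 hbj).2 hbbad
    · subst hij
      exact (hspec i).2.2.1 hai hbj hab
    · intro hadj
      have haA : a ∈ A := ((hspec i).1 hai).1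
      have habad : a ∈ badSet H A lam e i := by
        refine Set.mem_iUnion.2 ⟨j, Set.mem_iUnion.2 ⟨hij, Or.inr ?_⟩⟩
        exact Set.mem_iUnion.2 ⟨⟨b, hbj⟩, H.adj_symm hadj, haA⟩
      exact ((hspec i).1 hai).2 habad
  obtain ⟨S, hSB, hScard⟩ := Cardinal.le_mk_iff_exists_subset.1 hBsize
  exact ⟨S, hScard, hBpair.mono hSB⟩


end DEM

/-- Dushnik–Erdős–Miller, `λ → (λ, ω)²`: every graph on `λ`
vertices, `λ` infinite, contains a clique of size `λ` or a countably infinite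
independent set. -/
theorem stmt17 {V : Type u} (G : SimpleGraph V) (lam : Cardinal.{u})
    (hlam : ℵ₀ ≤ lam) (hV : #V = lam) :
    (∃ S : Set V, #S = lam ∧ S.Pairwise G.Adj) ∨
    (∃ S : Set V, #S = ℵ₀ ∧ ∀ a ∈ S, ∀ b ∈ S, a ≠ b → ¬ G.Adj a b) := by
  classical
  by_cases hgreen : ∃ S : Set V, #S = ℵ₀ ∧ ∀ a ∈ S, ∀ b ∈ S, a ≠ b → ¬ G.Adj a b
  · exact Or.inr hgreen
  · left
    have hno : ∀ S : Set V, S.Pairwise (Gᶜ).Adj → S.Finite := by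
      intro S hS
      by_contra hinf
      have h1 : ℵ₀ ≤ #S := by
        rw [Cardinal.aleph0_le_mk_iff]
        exact Set.infinite_coe_iff.2 hinf
      obtain ⟨T, hTS, hT⟩ := Cardinal.le_mk_iff_exists_subset.1 h1
      refine hgreen ⟨T, hT, ?_⟩
      intro a ha b hb hab
      exact ((G.compl_adj a b).1 (hS (hTS ha) (hTS hb) hab)).2
    have hVge : lam ≤ #V := hV.ge
    have hfin : ∃ S : Set V, #S = lam ∧ S.Pairwise (fun a b => ¬ (Gᶜ).Adj a b) := by
      by_cases hreg : lam.IsRegular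
      · obtain ⟨S, -, hcard, hp⟩ :=
          DEM.lemmaReg (Gᶜ) hno hreg Set.univ (by rw [mk_univ]; exact hVge)
        exact ⟨S, hcard, hp⟩
      · exact DEM.lemmaSing (Gᶜ) hno hlam hreg hVge
    obtain ⟨S, hcard, hp⟩ := hfin
    refine ⟨S, hcard, ?_⟩
    intro a ha b hb hab
    by_contra hadj
    exact hp ha hb hab ((G.compl_adj a b).2 ⟨hab, hadj⟩)
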